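/- Let T be a rooted tree with root r(T), and let the subtrees rooted at the children of r(T) fall into g rooted-isomorphism classes, the j-th class consisting of m_j copies of T_j. Then Fix(T) = Σ_{j=1}^{g} [ (m_j − 1) if Fix(T_j) = 0, and m_j · Fix(T_j) otherwise ], where Fix is computed with respect to root-preserving automorphisms. -/

import Mathlib

open SimpleGraph

/-- `φ` is a distinguishing labeling of `G`: the only automorphism preserving `φ` is the identity. -/
def IsDist {V α : Type*} (G : SimpleGraph V) (φ : V → α) : Prop :=
  ∀ π : G ≃g G, (∀ v, φ (π v) = φ v) → ∀ v, π v = v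

/-- The distinguishing number `D(G)`. -/
noncomputable def distNum {V : Type*} (G : SimpleGraph V) : ℕ :=
  sInf {c : ℕ | ∃ φ : V → Fin c, IsDist G φ}

/-- `S` is a fixing set of `G`. -/
def IsFixingSet {V : Type*} (G : SimpleGraph V) (S : Set V) : Prop :=
  ∀ π : G ≃g G, (∀ v ∈ S, π v = v) → ∀ v, π v = v

/-- The fixing number `Fix(G)`. -/
noncomputable def fixNum {V : Type*} (G : SimpleGraph V) : ℕ :=
  sInf {n : ℕ | ∃ S : Set V, S.ncard = n ∧ IsFixingSet G S}

/-- `D(G, c)`: the number of pairwise inequivalent distinguishing labelings of `G`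
using at most `c` colors. -/
noncomputable def countDist {V : Type*} (G : SimpleGraph V) (c : ℕ) : ℕ :=
  Nat.card (Quot (fun φ ψ : {φ : V → Fin c // IsDist G φ} =>
    ∃ π : G ≃g G, ∀ v, φ.1 v = ψ.1 (π v)))

/-- The disjoint union of `r` copies of `G`. -/
def copies {V : Type*} (r : ℕ) (G : SimpleGraph V) : SimpleGraph (Fin r × V) where
  Adj x y := x.1 = y.1 ∧ G.Adj x.2 y.2
  symm := by
    constructor
    rintro ⟨i, u⟩ ⟨j, v⟩ ⟨h1, h2⟩
    exact ⟨h1.symm, h2.symm⟩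
  loopless := by
    constructor
    rintro ⟨i, u⟩ ⟨-, h⟩
    exact G.loopless.irrefl u h

/-- A distinguishing labeling of the graph `G` rooted at `r`:
the only root-preserving automorphism preserving `φ` is the identity. -/
def IsRDist {V α : Type*} (G : SimpleGraph V) (r : V) (φ : V → α) : Prop :=
  ∀ π : G ≃g G, π r = r → (∀ v, φ (π v) = φ v) → ∀ v, π v = v

/-- The distinguishing number of the graph `G` rooted at `r`. -/
noncomputable def rdistNum {V : Type*} (G : SimpleGraph V) (r : V) : ℕ :=
  sInf {c : ℕ | ∃ φ : V → Fin c, IsRDist G r φ}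

/-- The number of pairwise inequivalent (under root-preserving automorphisms)
distinguishing labelings of the rooted graph `(G, r)` using at most `c` colors. -/
noncomputable def rcountDist {V : Type*} (G : SimpleGraph V) (r : V) (c : ℕ) : ℕ :=
  Nat.card (Quot (fun φ ψ : {φ : V → Fin c // IsRDist G r φ} =>
    ∃ π : G ≃g G, π r = r ∧ ∀ v, φ.1 v = ψ.1 (π v)))

/-- `S` is a fixing set of the graph `G` rooted at `r` (w.r.t. root-preserving automorphisms). -/
def IsRFix {V : Type*} (G : SimpleGraph V) (r : V) (S : Set V) : Prop :=
  ∀ π : G ≃g G, π r = r → (∀ v ∈ S, π v = v) → ∀ v, π v = v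

/-- The fixing number of the graph `G` rooted at `r`. -/
noncomputable def rfixNum {V : Type*} (G : SimpleGraph V) (r : V) : ℕ :=
  sInf {n : ℕ | ∃ S : Set V, S.ncard = n ∧ IsRFix G r S}

/-- A rooted isomorphism between `(G, r)` and `(H, s)`. -/
def RootedIso {V W : Type*} (G : SimpleGraph V) (r : V) (H : SimpleGraph W) (s : W) : Prop :=
  ∃ e : G ≃g H, e r = s

/-- The vertex set of the subtree hanging below `y` in the tree `T` rooted at `r`:
vertices reachable from `y` by a walk avoiding `r`. -/
def subSet {V : Type*} (T : SimpleGraph V) (r y : V) : Set V :=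
  {v | ∃ p : T.Walk y v, r ∉ p.support}

/-- The subtree of `T` (rooted at `r`) hanging below `y`, as an induced subgraph. -/
def subTree {V : Type*} (T : SimpleGraph V) (r y : V) : SimpleGraph (subSet T r y) :=
  T.induce (subSet T r y)

/-- The root of the subtree hanging below `y`, namely `y` itself. -/
def subRoot {V : Type*} (T : SimpleGraph V) (r y : V) (h : y ≠ r) : subSet T r y :=
  ⟨y, SimpleGraph.Walk.nil, by simpa [SimpleGraph.Walk.support_nil] using h.symm⟩

section Aux
variable {V : Type*} {T : SimpleGraph V} {r : V}

lemma mem_subSet_self {y : V} (h : y ≠ r) : y ∈ subSet T r y :=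
  ⟨Walk.nil, by simpa using h.symm⟩

lemma root_not_mem_subSet {y : V} : r ∉ subSet T r y := by
  rintro ⟨p, hp⟩; exact hp p.end_mem_support

lemma ne_root_of_mem_subSet {y v : V} (h : v ∈ subSet T r y) : v ≠ r := by
  rintro rfl; exact root_not_mem_subSet h

lemma subSet_closed {y u v : V} (hu : u ∈ subSet T r y) (huv : T.Adj u v) (hv : v ≠ r) :
    v ∈ subSet T r y := by
  obtain ⟨p, hp⟩ := hu
  refine ⟨p.append (Walk.cons huv Walk.nil), ?_⟩
  rw [Walk.mem_support_append_iff]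
  rintro (h | h)
  · exact hp h
  · simp only [Walk.support_cons, Walk.support_nil, List.mem_cons, List.mem_singleton,
      List.not_mem_nil, or_false] at h
    rcases h with rfl | rfl
    · exact hp p.end_mem_support
    · exact hv rfl

lemma exists_child (hT : T.IsTree) (v : V) (hv : v ≠ r) :
    ∃ y, T.Adj r y ∧ v ∈ subSet T r y := by
  classical
  obtain ⟨p, hp⟩ : ∃ p : T.Walk r v, p.IsPath :=
    ⟨((hT.isConnected.preconnected r v).some.toPath : T.Path r v).1,
      ((hT.isConnected.preconnected r v).some.toPath : T.Path r v).2⟩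
  cases p with
  | nil => exact absurd rfl hv.symm
  | cons h q =>
    rename_i y
    rw [Walk.cons_isPath_iff] at hp
    exact ⟨y, h, q, hp.2⟩

lemma child_unique (hT : T.IsTree) {y₁ y₂ v : V} (h₁ : T.Adj r y₁) (h₂ : T.Adj r y₂)
    (hv₁ : v ∈ subSet T r y₁) (hv₂ : v ∈ subSet T r y₂) : y₁ = y₂ := by
  classical
  obtain ⟨p₁, hp₁⟩ := hv₁
  obtain ⟨p₂, hp₂⟩ := hv₂
  have hq₁ : r ∉ p₁.toPath.1.support := fun h => hp₁ (Walk.support_toPath_subset _ h)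
  have hq₂ : r ∉ p₂.toPath.1.support := fun h => hp₂ (Walk.support_toPath_subset _ h)
  have hc₁ : (Walk.cons h₁ p₁.toPath.1).IsPath := by
    rw [Walk.cons_isPath_iff]; exact ⟨p₁.toPath.2, hq₁⟩
  have hc₂ : (Walk.cons h₂ p₂.toPath.1).IsPath := by
    rw [Walk.cons_isPath_iff]; exact ⟨p₂.toPath.2, hq₂⟩
  have := (hT.existsUnique_path r v).unique hc₁ hc₂
  injection this

lemma subSet_disjoint (hT : T.IsTree) {y₁ y₂ : V} (h₁ : T.Adj r y₁) (h₂ : T.Adj r y₂)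
    (hne : y₁ ≠ y₂) : Disjoint (subSet T r y₁) (subSet T r y₂) := by
  rw [Set.disjoint_left]
  intro v hv₁ hv₂
  exact hne (child_unique hT h₁ h₂ hv₁ hv₂)

lemma eq_child_of_adj_root (hT : T.IsTree) {y v : V} (hy : T.Adj r y)
    (hv : v ∈ subSet T r y) (hadj : T.Adj r v) : v = y :=
  child_unique hT hadj hy (mem_subSet_self hadj.ne') hv

end Aux

section Aux2
variable {V W : Type*} {T : SimpleGraph V} {r : V}

lemma map_mem_subSet (π : T ≃g T) (hr : π r = r) {y v : V} (hv : v ∈ subSet T r y) :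
    π v ∈ subSet T r (π y) := by
  obtain ⟨p, hp⟩ := hv
  refine ⟨p.map π.toHom, ?_⟩
  rw [Walk.support_map]
  rintro h
  obtain ⟨a, ha, ha'⟩ := List.mem_map.1 h
  have : a = r := π.toEquiv.injective (by simpa [hr] using ha')
  exact hp (this ▸ ha)

lemma symm_root (π : T ≃g T) (hr : π r = r) : π.symm r = r := by
  exact π.toEquiv.injective (by show π (π.symm r) = π r; rw [RelIso.apply_symm_apply, hr])

lemma mem_subSet_map_iff (π : T ≃g T) (hr : π r = r) {y v : V} :
    π v ∈ subSet T r (π y) ↔ v ∈ subSet T r y := by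
  constructor
  · intro h
    have := map_mem_subSet π.symm (symm_root π hr) h
    simpa using this
  · exact map_mem_subSet π hr

/-- Restriction of a root-preserving automorphism to the subtree below `y`. -/
noncomputable def restrictIso (π : T ≃g T) (hr : π r = r) (y : V) :
    subTree T r y ≃g subTree T r (π y) where
  toEquiv := π.toEquiv.subtypeEquiv fun v => (mem_subSet_map_iff π hr).symm
  map_rel_iff' := by
    intro a b
    simp only [subTree, Equiv.subtypeEquiv, comap_adj, Function.Embedding.coe_subtype,
      Equiv.coe_fn_mk]
    exact π.map_adj_iff

lemma restrictIso_root (π : T ≃g T) (hr : π r = r) {y : V} (hy : y ≠ r) :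
    restrictIso π hr y (subRoot T r y hy) =
      subRoot T r (π y) (fun h => hy (π.toEquiv.injective (h.trans hr.symm))) := by
  rfl

lemma RootedIso.symm {G : SimpleGraph V} {H : SimpleGraph W} {a : V} {b : W}
    (h : RootedIso G a H b) : RootedIso H b G a := by
  obtain ⟨e, he⟩ := h
  exact ⟨e.symm, by rw [← he, RelIso.symm_apply_apply]⟩

lemma RootedIso.trans {X : Type*} {G : SimpleGraph V} {H : SimpleGraph W} {K : SimpleGraph X}
    {a : V} {b : W} {c : X} (h₁ : RootedIso G a H b) (h₂ : RootedIso H b K c) :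
    RootedIso G a K c := by
  obtain ⟨e₁, he₁⟩ := h₁
  obtain ⟨e₂, he₂⟩ := h₂
  exact ⟨e₁.trans e₂, by simp [RelIso.trans_apply, he₁, he₂]⟩

lemma isRFix_map {H : SimpleGraph W} {s : W} (e : T ≃g H) (he : e r = s) {S : Set V}
    (hS : IsRFix T r S) : IsRFix H s ((fun v => e v) '' S) := by
  intro π hπ hfix w
  have key : ∀ v : V, (e.trans (π.trans e.symm)) v = v := by
    refine hS (e.trans (π.trans e.symm)) ?_ ?_
    · show e.symm (π (e r)) = r
      rw [he, hπ, ← he, RelIso.symm_apply_apply]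
    · intro v hv
      have h2 : π (e v) = e v := hfix _ ⟨v, hv, rfl⟩
      show e.symm (π (e v)) = v
      rw [h2, RelIso.symm_apply_apply]
  have h3 := key (e.symm w)
  simp only [RelIso.trans_apply, RelIso.apply_symm_apply] at h3
  exact e.toEquiv.symm.injective h3

lemma rfixNum_congr {H : SimpleGraph W} {s : W} (h : RootedIso T r H s) :
    rfixNum T r = rfixNum H s := by
  obtain ⟨e, he⟩ := h
  have h1 : {n : ℕ | ∃ S : Set V, S.ncard = n ∧ IsRFix T r S} ⊆
      {n : ℕ | ∃ S : Set W, S.ncard = n ∧ IsRFix H s S} := by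
    rintro n ⟨S, rfl, hS⟩
    exact ⟨(fun v => e v) '' S, Set.ncard_image_of_injective _ e.toEquiv.injective,
      isRFix_map e he hS⟩
  have h2 : {n : ℕ | ∃ S : Set W, S.ncard = n ∧ IsRFix H s S} ⊆
      {n : ℕ | ∃ S : Set V, S.ncard = n ∧ IsRFix T r S} := by
    rintro n ⟨S, rfl, hS⟩
    exact ⟨(fun v => e.symm v) '' S, Set.ncard_image_of_injective _ e.symm.toEquiv.injective,
      isRFix_map e.symm (e.toEquiv.injective (by show e (e.symm s) = e r; rw [RelIso.apply_symm_apply, he])) hS⟩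
  unfold rfixNum
  rw [Set.Subset.antisymm h1 h2]

lemma rfix_set_nonempty [Finite V] (G : SimpleGraph V) (a : V) :
    {n : ℕ | ∃ S : Set V, S.ncard = n ∧ IsRFix G a S}.Nonempty :=
  ⟨(Set.univ : Set V).ncard, Set.univ, rfl, fun π _ h v => h v trivial⟩

lemma isRFix_of_rfixNum_zero [Finite V] {G : SimpleGraph V} {a : V}
    (h : rfixNum G a = 0) (S : Set V) : IsRFix G a S := by
  have h0 : (0 : ℕ) ∈ {n : ℕ | ∃ S : Set V, S.ncard = n ∧ IsRFix G a S} := by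
    rw [← h]; exact Nat.sInf_mem (rfix_set_nonempty G a)
  obtain ⟨S₀, hS₀, hfix⟩ := h0
  rw [Set.ncard_eq_zero S₀.toFinite] at hS₀
  subst hS₀
  intro π hπ _
  exact hfix π hπ (by simp)

lemma rfixNum_mem [Finite V] (G : SimpleGraph V) (a : V) :
    ∃ S : Set V, S.ncard = rfixNum G a ∧ IsRFix G a S :=
  Nat.sInf_mem (rfix_set_nonempty G a)

end Aux2

section Glue
variable {V : Type*} {T : SimpleGraph V} {r : V}

open Classical in
/-- Extend an automorphism of the subtree below `y` by the identity. -/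
noncomputable def glueFun {y : V} (α : subTree T r y ≃g subTree T r y) : V → V :=
  fun v => if h : v ∈ subSet T r y then (α ⟨v, h⟩ : V) else v

lemma glueFun_mem {y : V} (α : subTree T r y ≃g subTree T r y) {v : V}
    (h : v ∈ subSet T r y) : glueFun α v = (α ⟨v, h⟩ : V) := dif_pos h

lemma glueFun_not_mem {y : V} (α : subTree T r y ≃g subTree T r y) {v : V}
    (h : v ∉ subSet T r y) : glueFun α v = v := dif_neg h

lemma glueFun_leftInverse {y : V} (α : subTree T r y ≃g subTree T r y) :
    Function.LeftInverse (glueFun α.symm) (glueFun α) := by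
  intro v
  by_cases h : v ∈ subSet T r y
  · rw [glueFun_mem α h, glueFun_mem α.symm (α ⟨v, h⟩).2]
    show (α.symm (α ⟨v, h⟩) : V) = v
    rw [RelIso.symm_apply_apply]
  · rw [glueFun_not_mem α h, glueFun_not_mem α.symm h]

lemma glueFun_adj (hT : T.IsTree) {y : V} (hy : T.Adj r y)
    (α : subTree T r y ≃g subTree T r y)
    (hα : α (subRoot T r y hy.ne') = subRoot T r y hy.ne')
    {u v : V} (huv : T.Adj u v) : T.Adj (glueFun α u) (glueFun α v) := by
  have key : ∀ u v : V, T.Adj u v → u ∈ subSet T r y →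
      T.Adj (glueFun α u) (glueFun α v) := by
    intro u v huv hu
    by_cases hv : v ∈ subSet T r y
    · rw [glueFun_mem α hu, glueFun_mem α hv]
      exact α.map_rel_iff.2 huv
    · have hvr : v = r := by
        by_contra hvr
        exact hv (subSet_closed hu huv hvr)
      have huy : u = y := eq_child_of_adj_root hT hy hu (hvr ▸ huv).symm
      rw [hvr, glueFun_mem α hu, glueFun_not_mem α root_not_mem_subSet]
      have h2 : (⟨u, hu⟩ : subSet T r y) = subRoot T r y hy.ne' := Subtype.ext huy
      rw [h2, hα]
      exact hy.symm
  by_cases hu : u ∈ subSet T r y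
  · exact key u v huv hu
  · by_cases hv : v ∈ subSet T r y
    · exact (key v u huv.symm hv).symm
    · rw [glueFun_not_mem α hu, glueFun_not_mem α hv]; exact huv

lemma symm_root_sub {y : V} (hy : T.Adj r y) {α : subTree T r y ≃g subTree T r y}
    (hα : α (subRoot T r y hy.ne') = subRoot T r y hy.ne') :
    α.symm (subRoot T r y hy.ne') = subRoot T r y hy.ne' := by
  apply α.toEquiv.injective
  show α (α.symm _) = α _
  rw [RelIso.apply_symm_apply, hα]

/-- The automorphism of `T` obtained by extending `α` by the identity. -/
noncomputable def glueOne (hT : T.IsTree) {y : V} (hy : T.Adj r y)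
    (α : subTree T r y ≃g subTree T r y)
    (hα : α (subRoot T r y hy.ne') = subRoot T r y hy.ne') : T ≃g T where
  toFun := glueFun α
  invFun := glueFun α.symm
  left_inv := glueFun_leftInverse α
  right_inv := fun v => by
    have h : glueFun α (glueFun α.symm v) = v := glueFun_leftInverse α.symm v
    exact h
  map_rel_iff' := by
    intro a b
    constructor
    · intro h
      have h2 : T.Adj (glueFun α.symm (glueFun α a)) (glueFun α.symm (glueFun α b)) :=
        glueFun_adj hT hy α.symm (symm_root_sub hy hα) h
      rwa [glueFun_leftInverse α a, glueFun_leftInverse α b] at h2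
    · exact glueFun_adj hT hy α hα

lemma glueOne_apply (hT : T.IsTree) {y : V} (hy : T.Adj r y)
    (α : subTree T r y ≃g subTree T r y)
    (hα : α (subRoot T r y hy.ne') = subRoot T r y hy.ne') (v : V) :
    glueOne hT hy α hα v = glueFun α v := rfl

open Classical in
/-- Swap the subtrees below `y₁` and `y₂` along `e`, extending by the identity. -/
noncomputable def swapFun {y₁ y₂ : V} (e : subTree T r y₁ ≃g subTree T r y₂) : V → V :=
  fun v => if h : v ∈ subSet T r y₁ then (e ⟨v, h⟩ : V)
    else if h : v ∈ subSet T r y₂ then (e.symm ⟨v, h⟩ : V) else v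

variable {y₁ y₂ : V} {e : subTree T r y₁ ≃g subTree T r y₂}

lemma swapFun_mem₁ {v : V} (h : v ∈ subSet T r y₁) : swapFun e v = (e ⟨v, h⟩ : V) :=
  dif_pos h

lemma swapFun_mem₂ (hd : Disjoint (subSet T r y₁) (subSet T r y₂)) {v : V}
    (h : v ∈ subSet T r y₂) : swapFun e v = (e.symm ⟨v, h⟩ : V) := by
  have h1 : v ∉ subSet T r y₁ := fun h1 => (Set.disjoint_left.1 hd) h1 h
  rw [swapFun, dif_neg h1, dif_pos h]

lemma swapFun_not_mem {v : V} (h1 : v ∉ subSet T r y₁) (h2 : v ∉ subSet T r y₂) :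
    swapFun e v = v := by
  rw [swapFun, dif_neg h1, dif_neg h2]

lemma swapFun_involutive (hd : Disjoint (subSet T r y₁) (subSet T r y₂)) :
    Function.Involutive (swapFun e) := by
  intro v
  by_cases h1 : v ∈ subSet T r y₁
  · rw [swapFun_mem₁ h1, swapFun_mem₂ hd (e ⟨v, h1⟩).2]
    show (e.symm (e ⟨v, h1⟩) : V) = v
    rw [RelIso.symm_apply_apply]
  · by_cases h2 : v ∈ subSet T r y₂
    · rw [swapFun_mem₂ hd h2, swapFun_mem₁ (e.symm ⟨v, h2⟩).2]
      show (e (e.symm ⟨v, h2⟩) : V) = v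
      rw [RelIso.apply_symm_apply]
    · rw [swapFun_not_mem h1 h2, swapFun_not_mem h1 h2]

lemma swapFun_adj (hT : T.IsTree) (h₁ : T.Adj r y₁) (h₂ : T.Adj r y₂)
    (hd : Disjoint (subSet T r y₁) (subSet T r y₂))
    (he : e (subRoot T r y₁ h₁.ne') = subRoot T r y₂ h₂.ne')
    {u v : V} (huv : T.Adj u v) : T.Adj (swapFun e u) (swapFun e v) := by
  have he' : e.symm (subRoot T r y₂ h₂.ne') = subRoot T r y₁ h₁.ne' := by
    rw [← he, RelIso.symm_apply_apply]
  have key : ∀ u v : V, T.Adj u v → u ∈ subSet T r y₁ ∨ u ∈ subSet T r y₂ →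
      T.Adj (swapFun e u) (swapFun e v) := by
    rintro u v huv (hu | hu)
    · by_cases hv : v ∈ subSet T r y₁
      · rw [swapFun_mem₁ hu, swapFun_mem₁ hv]
        exact e.map_rel_iff.2 huv
      · have hvr : v = r := by
          by_contra hvr
          exact hv (subSet_closed hu huv hvr)
        have huy : u = y₁ := eq_child_of_adj_root hT h₁ hu (hvr ▸ huv).symm
        rw [hvr, swapFun_mem₁ hu, swapFun_not_mem root_not_mem_subSet root_not_mem_subSet]
        have h3 : (⟨u, hu⟩ : subSet T r y₁) = subRoot T r y₁ h₁.ne' := Subtype.ext huy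
        rw [h3, he]
        exact h₂.symm
    · by_cases hv : v ∈ subSet T r y₂
      · rw [swapFun_mem₂ hd hu, swapFun_mem₂ hd hv]
        exact e.symm.map_rel_iff.2 huv
      · have hvr : v = r := by
          by_contra hvr
          exact hv (subSet_closed hu huv hvr)
        have huy : u = y₂ := eq_child_of_adj_root hT h₂ hu (hvr ▸ huv).symm
        rw [hvr, swapFun_mem₂ hd hu, swapFun_not_mem root_not_mem_subSet root_not_mem_subSet]
        have h3 : (⟨u, hu⟩ : subSet T r y₂) = subRoot T r y₂ h₂.ne' := Subtype.ext huy
        rw [h3, he']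
        exact h₁.symm
  by_cases hu : u ∈ subSet T r y₁ ∨ u ∈ subSet T r y₂
  · exact key u v huv hu
  · push_neg at hu
    by_cases hv : v ∈ subSet T r y₁ ∨ v ∈ subSet T r y₂
    · exact (key v u huv.symm hv).symm
    · push_neg at hv
      rw [swapFun_not_mem hu.1 hu.2, swapFun_not_mem hv.1 hv.2]
      exact huv

/-- The automorphism of `T` swapping the subtrees below `y₁` and `y₂`. -/
noncomputable def glueSwap (hT : T.IsTree) (h₁ : T.Adj r y₁) (h₂ : T.Adj r y₂)
    (hd : Disjoint (subSet T r y₁) (subSet T r y₂))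
    (he : e (subRoot T r y₁ h₁.ne') = subRoot T r y₂ h₂.ne') : T ≃g T where
  toEquiv := (swapFun_involutive (e := e) hd).toPerm _
  map_rel_iff' := by
    intro a b
    constructor
    · intro h
      have h2 : T.Adj (swapFun e (swapFun e a)) (swapFun e (swapFun e b)) :=
        swapFun_adj hT h₁ h₂ hd he h
      rwa [swapFun_involutive hd a, swapFun_involutive hd b] at h2
    · exact swapFun_adj hT h₁ h₂ hd he

lemma glueSwap_apply (hT : T.IsTree) (h₁ : T.Adj r y₁) (h₂ : T.Adj r y₂)
    (hd : Disjoint (subSet T r y₁) (subSet T r y₂))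
    (he : e (subRoot T r y₁ h₁.ne') = subRoot T r y₂ h₂.ne') (v : V) :
    glueSwap hT h₁ h₂ hd he v = swapFun e v := rfl

end Glue

section Aux3
variable {V : Type*} {T : SimpleGraph V} {r : V}

lemma ncard_biUnion_eq {ι W : Type*} [DecidableEq ι] (s : Finset ι) (f : ι → Set W)
    (hfin : ∀ i ∈ s, (f i).Finite)
    (hdisj : ∀ i ∈ s, ∀ j ∈ s, i ≠ j → Disjoint (f i) (f j)) :
    (⋃ i ∈ s, f i).ncard = ∑ i ∈ s, (f i).ncard := by
  induction s using Finset.induction_on with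
  | empty => simp
  | @insert a s ha ih =>
    rw [Finset.set_biUnion_insert, Finset.sum_insert ha]
    have hd : Disjoint (f a) (⋃ i ∈ s, f i) := by
      rw [Set.disjoint_iUnion₂_right]
      intro i hi
      exact hdisj a (Finset.mem_insert_self a s) i (Finset.mem_insert_of_mem hi)
        (fun h => ha (h ▸ hi))
    rw [Set.ncard_union_eq hd (hfin a (Finset.mem_insert_self a s))
      (Set.Finite.biUnion s.finite_toSet fun i hi => hfin i (Finset.mem_insert_of_mem hi))]
    rw [ih (fun i hi => hfin i (Finset.mem_insert_of_mem hi))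
      (fun i hi j hj hij =>
        hdisj i (Finset.mem_insert_of_mem hi) j (Finset.mem_insert_of_mem hj) hij)]

/-- Restriction of a root-preserving automorphism fixing `y` to an automorphism of
the subtree below `y`. -/
noncomputable def restrictAuto (π : T ≃g T) (hr : π r = r) {y : V} (hy : π y = y) :
    subTree T r y ≃g subTree T r y where
  toEquiv := π.toEquiv.subtypeEquiv fun v => by
    conv_rhs => rw [← hy]
    exact (mem_subSet_map_iff π hr).symm
  map_rel_iff' := by
    intro a b
    simp only [subTree, Equiv.subtypeEquiv, comap_adj, Function.Embedding.coe_subtype,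
      Equiv.coe_fn_mk]
    exact π.map_adj_iff

lemma restrictAuto_apply (π : T ≃g T) (hr : π r = r) {y : V} (hy : π y = y)
    (v : subSet T r y) : (restrictAuto π hr hy v : V) = π v := rfl

lemma restrictAuto_root (π : T ≃g T) (hr : π r = r) {y : V} (hy : π y = y) (hyr : y ≠ r) :
    restrictAuto π hr hy (subRoot T r y hyr) = subRoot T r y hyr :=
  Subtype.ext hy

end Aux3

section Main
variable {V : Type*} [Fintype V] {T : SimpleGraph V} {r : V}

lemma fiber_card {g : ℕ} (P : V → Prop) [DecidablePred P] (cls : V → Fin g)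
    [DecidableEq (Fin g)] (j : Fin g) :
    (Finset.univ.filter (fun y : {y : V // P y} => cls y.1 = j)).card
      = Nat.card {y : V // P y ∧ cls y = j} := by
  classical
  calc (Finset.univ.filter (fun y : {y : V // P y} => cls y.1 = j)).card
      = Fintype.card {y : {y : V // P y} // cls y.1 = j} := (Fintype.card_subtype _).symm
    _ = Fintype.card {y : V // P y ∧ cls y = j} :=
        Fintype.card_congr (Equiv.subtypeSubtypeEquivSubtypeInter P (fun y => cls y = j))
    _ = Nat.card {y : V // P y ∧ cls y = j} := (Nat.card_eq_fintype_card).symm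

lemma cls_map (hT : T.IsTree) {g : ℕ} (reps : Fin g → V) (hreps : ∀ j, T.Adj r (reps j))
    (cls : V → Fin g)
    (hiso : ∀ y, (h : T.Adj r y) →
      RootedIso (subTree T r y) (subRoot T r y h.ne')
        (subTree T r (reps (cls y))) (subRoot T r (reps (cls y)) (hreps (cls y)).ne'))
    (hdistinct : ∀ j k : Fin g, j ≠ k →
      ¬ RootedIso (subTree T r (reps j)) (subRoot T r (reps j) (hreps j).ne')
        (subTree T r (reps k)) (subRoot T r (reps k) (hreps k).ne'))
    (π : T ≃g T) (hr : π r = r) (y : V) (h : T.Adj r y) : cls (π y) = cls y := by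
  have hchild : T.Adj r (π y) := by
    have h2 := π.map_rel_iff.2 h
    rwa [hr] at h2
  by_contra hne
  have e1 : RootedIso (subTree T r y) (subRoot T r y h.ne')
      (subTree T r (π y)) (subRoot T r (π y) hchild.ne') :=
    ⟨restrictIso π hr y, rfl⟩
  exact hdistinct (cls (π y)) (cls y) hne
    (((hiso (π y) hchild).symm.trans e1.symm).trans (hiso y h))

end Main

section Bounds
variable {V : Type*} [Fintype V] {T : SimpleGraph V} {r : V}

lemma upper_bound (hT : T.IsTree)
    {g : ℕ} (reps : Fin g → V) (hreps : ∀ j, T.Adj r (reps j))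
    (cls : V → Fin g)
    (hclsreps : ∀ j, cls (reps j) = j)
    (hiso : ∀ y, (h : T.Adj r y) →
      RootedIso (subTree T r y) (subRoot T r y h.ne')
        (subTree T r (reps (cls y))) (subRoot T r (reps (cls y)) (hreps (cls y)).ne'))
    (hdistinct : ∀ j k : Fin g, j ≠ k →
      ¬ RootedIso (subTree T r (reps j)) (subRoot T r (reps j) (hreps j).ne')
        (subTree T r (reps k)) (subRoot T r (reps k) (hreps k).ne'))
    (m : Fin g → ℕ) (hm : ∀ j, m j = Nat.card {y : V // T.Adj r y ∧ cls y = j}) :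
    rfixNum T r ≤
      ∑ j : Fin g,
        if rfixNum (subTree T r (reps j)) (subRoot T r (reps j) (hreps j).ne') = 0
        then m j - 1
        else m j * rfixNum (subTree T r (reps j)) (subRoot T r (reps j) (hreps j).ne') := by
  classical
  choose F hFcard hFfix using fun j : Fin g =>
    rfixNum_mem (subTree T r (reps j)) (subRoot T r (reps j) (hreps j).ne')
  choose ey hey using fun y : {y : V // T.Adj r y} => hiso y.1 y.2
  have hey' : ∀ y : {y : V // T.Adj r y},
      (ey y).symm (subRoot T r (reps (cls y.1)) (hreps (cls y.1)).ne')
        = subRoot T r y.1 y.2.ne' := fun y =>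
    (ey y).toEquiv.injective (by
      show (ey y) ((ey y).symm _) = (ey y) _
      rw [RelIso.apply_symm_apply, hey y])
  have hrfx : ∀ (y : V) (h : T.Adj r y), rfixNum (subTree T r y) (subRoot T r y h.ne') =
      rfixNum (subTree T r (reps (cls y))) (subRoot T r (reps (cls y)) (hreps (cls y)).ne') :=
    fun y h => rfixNum_congr (hiso y h)
  set B : {y : V // T.Adj r y} → Set V := fun y =>
    if rfixNum (subTree T r (reps (cls y.1)))
        (subRoot T r (reps (cls y.1)) (hreps (cls y.1)).ne') = 0
    then (if y.1 = reps (cls y.1) then (∅ : Set V) else {y.1})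
    else Subtype.val '' ((fun v => (ey y).symm v) '' F (cls y.1)) with hB
  have hBsub : ∀ y, B y ⊆ subSet T r y.1 := by
    intro y v hv
    simp only [hB] at hv
    split_ifs at hv with h1 h2
    · exact absurd hv (Set.notMem_empty v)
    · rw [Set.mem_singleton_iff] at hv
      subst hv
      exact mem_subSet_self y.2.ne'
    · obtain ⟨w, _, rfl⟩ := hv
      exact w.2
  have hBcard : ∀ y, (B y).ncard =
      if rfixNum (subTree T r (reps (cls y.1)))
          (subRoot T r (reps (cls y.1)) (hreps (cls y.1)).ne') = 0
      then (if y.1 = reps (cls y.1) then 0 else 1)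
      else rfixNum (subTree T r (reps (cls y.1)))
          (subRoot T r (reps (cls y.1)) (hreps (cls y.1)).ne') := by
    intro y
    simp only [hB]
    split_ifs with h1 h2
    · simp
    · simp
    · rw [Set.ncard_image_of_injective _ Subtype.val_injective,
        Set.ncard_image_of_injective _ (ey y).symm.injective,
        hFcard]
  set S : Set V := ⋃ y ∈ (Finset.univ : Finset {y : V // T.Adj r y}), B y with hS
  have hScard : S.ncard = ∑ y : {y : V // T.Adj r y}, (B y).ncard := by
    rw [hS]
    exact ncard_biUnion_eq Finset.univ B (fun i _ => Set.toFinite _)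
      (fun i _ j _ hij => Set.disjoint_of_subset (hBsub i) (hBsub j)
        (subSet_disjoint hT i.2 j.2 (fun h => hij (Subtype.ext h))))
  have hSval : (∑ y : {y : V // T.Adj r y}, (B y).ncard) =
      ∑ j : Fin g,
        if rfixNum (subTree T r (reps j)) (subRoot T r (reps j) (hreps j).ne') = 0
        then m j - 1
        else m j * rfixNum (subTree T r (reps j)) (subRoot T r (reps j) (hreps j).ne') := by
    rw [← Finset.sum_fiberwise Finset.univ (fun y : {y : V // T.Adj r y} => cls y.1)
      (fun y => (B y).ncard)]
    refine Finset.sum_congr rfl (fun j _ => ?_)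
    have hcongr : ∀ y ∈ Finset.univ.filter (fun y : {y : V // T.Adj r y} => cls y.1 = j),
        (B y).ncard = if rfixNum (subTree T r (reps j)) (subRoot T r (reps j) (hreps j).ne') = 0
          then (if y.1 = reps j then 0 else 1)
          else rfixNum (subTree T r (reps j)) (subRoot T r (reps j) (hreps j).ne') := by
      intro y hy
      have hyj : cls y.1 = j := (Finset.mem_filter.1 hy).2
      rw [hBcard y, hyj]
    rw [Finset.sum_congr rfl hcongr]
    have hfcard : (Finset.univ.filter (fun y : {y : V // T.Adj r y} => cls y.1 = j)).card
        = m j := by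
      rw [fiber_card (T.Adj r) cls j, ← hm j]
    by_cases h0 : rfixNum (subTree T r (reps j)) (subRoot T r (reps j) (hreps j).ne') = 0
    · simp only [h0, if_true, if_pos]
      have hrep : (⟨reps j, hreps j⟩ : {y : V // T.Adj r y}) ∈
          Finset.univ.filter (fun y : {y : V // T.Adj r y} => cls y.1 = j) :=
        Finset.mem_filter.2 ⟨Finset.mem_univ _, hclsreps j⟩
      have step1 : ∀ y : {y : V // T.Adj r y},
          (if y.1 = reps j then (0:ℕ) else 1)
            = (if y = ⟨reps j, hreps j⟩ then 0 else 1) := fun y =>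
        if_congr ⟨fun h => Subtype.ext h, fun h => by rw [h]⟩ rfl rfl
      rw [Finset.sum_congr rfl (fun y _ => step1 y)]
      have step2 : ∀ y : {y : V // T.Adj r y},
          (if y = (⟨reps j, hreps j⟩ : {y : V // T.Adj r y}) then (0:ℕ) else 1)
            = (if ¬ (y = ⟨reps j, hreps j⟩) then 1 else 0) := fun y => (ite_not _ _ _).symm
      rw [Finset.sum_congr rfl (fun y _ => step2 y), ← Finset.sum_filter]
      rw [Finset.sum_const, smul_eq_mul, mul_one]
      have : (Finset.univ.filter (fun y : {y : V // T.Adj r y} => cls y.1 = j)).filter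
          (fun y => ¬ (y = ⟨reps j, hreps j⟩))
          = (Finset.univ.filter (fun y : {y : V // T.Adj r y} => cls y.1 = j)).erase
            ⟨reps j, hreps j⟩ := by
        ext a
        simp [Finset.mem_erase, Finset.mem_filter, and_comm]
      rw [this, Finset.card_erase_of_mem hrep, hfcard]
    · simp only [h0, if_neg, if_false]
      rw [Finset.sum_const, smul_eq_mul, hfcard]
  -- S is a fixing set
  have hSfix : IsRFix T r S := by
    intro π hπr hfix v
    have hchild : ∀ y : V, T.Adj r y → T.Adj r (π y) := by
      intro y h
      have h2 := π.map_rel_iff.2 h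
      rwa [hπr] at h2
    have hclsπ : ∀ (y : V) (h : T.Adj r y), cls (π y) = cls y :=
      fun y h => cls_map hT reps hreps cls hiso hdistinct π hπr y h
    have hmemS : ∀ (y : {y : V // T.Adj r y}) (v : V), v ∈ B y → v ∈ S := by
      intro y v hv
      rw [hS]
      exact Set.mem_biUnion (Finset.mem_coe.2 (Finset.mem_univ y)) hv
    have hfixchild : ∀ y : {y : V // T.Adj r y}, π y.1 = y.1 := by
      intro y
      by_cases h0 : rfixNum (subTree T r (reps (cls y.1)))
          (subRoot T r (reps (cls y.1)) (hreps (cls y.1)).ne') = 0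
      · have hnonrep : ∀ z : {y : V // T.Adj r y}, cls z.1 = cls y.1 →
            z.1 ≠ reps (cls y.1) → π z.1 = z.1 := by
          intro z hz hzne
          apply hfix
          apply hmemS z
          have h0' : rfixNum (subTree T r (reps (cls z.1)))
              (subRoot T r (reps (cls z.1)) (hreps (cls z.1)).ne') = 0 := by
            rw [hz]; exact h0
          have hzne' : ¬ (z.1 = reps (cls z.1)) := by rw [hz]; exact hzne
          simp only [hB]
          rw [if_pos h0', if_neg hzne']
          exact Set.mem_singleton _
        by_cases hyrep : y.1 = reps (cls y.1)
        · by_contra hne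
          have hz : cls (π y.1) = cls y.1 := hclsπ y.1 y.2
          have hzne : π y.1 ≠ reps (cls y.1) := by
            rw [← hyrep]; exact hne
          have h2 := hnonrep ⟨π y.1, hchild y.1 y.2⟩ hz hzne
          exact hne (π.toEquiv.injective h2)
        · exact hnonrep y rfl hyrep
      · have hne : (B y).Nonempty := by
          apply Set.nonempty_of_ncard_ne_zero
          rw [hBcard y, if_neg h0]
          exact h0
        obtain ⟨s, hs⟩ := hne
        have hfs : π s = s := hfix s (hmemS y s hs)
        have hs1 : s ∈ subSet T r y.1 := hBsub y hs
        have hs2 : π s ∈ subSet T r (π y.1) := map_mem_subSet π hπr hs1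
        rw [hfs] at hs2
        exact child_unique hT (hchild y.1 y.2) y.2 hs2 hs1
    have hsub : ∀ (y : {y : V // T.Adj r y}) (v : V), v ∈ subSet T r y.1 → π v = v := by
      intro y v hv
      have hy := hfixchild y
      have hβroot := restrictAuto_root π hπr hy y.2.ne'
      by_cases h0 : rfixNum (subTree T r (reps (cls y.1)))
          (subRoot T r (reps (cls y.1)) (hreps (cls y.1)).ne') = 0
      · have h00 : rfixNum (subTree T r y.1) (subRoot T r y.1 y.2.ne') = 0 := by
          rw [hrfx y.1 y.2]; exact h0
        have h2 := isRFix_of_rfixNum_zero h00 ∅ (restrictAuto π hπr hy) hβroot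
          (by simp) ⟨v, hv⟩
        exact congrArg Subtype.val h2
      · have hfixset := isRFix_map (ey y).symm (hey' y) (hFfix (cls y.1))
        have hβfix : ∀ w ∈ (fun v => (ey y).symm v) '' F (cls y.1),
            (restrictAuto π hπr hy) w = w := by
          intro w hw
          apply Subtype.ext
          show π w.1 = w.1
          apply hfix
          apply hmemS y
          simp only [hB]
          rw [if_neg h0]
          exact ⟨w, hw, rfl⟩
        have h2 := hfixset (restrictAuto π hπr hy) hβroot hβfix ⟨v, hv⟩
        exact congrArg Subtype.val h2
    by_cases hvr : v = r
    · rw [hvr, hπr]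
    · obtain ⟨y, hy, hv⟩ := exists_child hT v hvr
      exact hsub ⟨y, hy⟩ v hv
  exact Nat.sInf_le ⟨S, by rw [hScard, hSval], hSfix⟩

lemma lower_bound (hT : T.IsTree)
    {g : ℕ} (reps : Fin g → V) (hreps : ∀ j, T.Adj r (reps j))
    (cls : V → Fin g)
    (hclsreps : ∀ j, cls (reps j) = j)
    (hiso : ∀ y, (h : T.Adj r y) →
      RootedIso (subTree T r y) (subRoot T r y h.ne')
        (subTree T r (reps (cls y))) (subRoot T r (reps (cls y)) (hreps (cls y)).ne'))
    (hdistinct : ∀ j k : Fin g, j ≠ k →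
      ¬ RootedIso (subTree T r (reps j)) (subRoot T r (reps j) (hreps j).ne')
        (subTree T r (reps k)) (subRoot T r (reps k) (hreps k).ne'))
    (m : Fin g → ℕ) (hm : ∀ j, m j = Nat.card {y : V // T.Adj r y ∧ cls y = j}) :
    (∑ j : Fin g,
        if rfixNum (subTree T r (reps j)) (subRoot T r (reps j) (hreps j).ne') = 0
        then m j - 1
        else m j * rfixNum (subTree T r (reps j)) (subRoot T r (reps j) (hreps j).ne'))
      ≤ rfixNum T r := by
  classical
  obtain ⟨S, hScard, hSfix⟩ := rfixNum_mem T r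
  have hrfx : ∀ (y : V) (h : T.Adj r y), rfixNum (subTree T r y) (subRoot T r y h.ne') =
      rfixNum (subTree T r (reps (cls y))) (subRoot T r (reps (cls y)) (hreps (cls y)).ne') :=
    fun y h => rfixNum_congr (hiso y h)
  set n : {y : V // T.Adj r y} → ℕ := fun y => (S ∩ subSet T r y.1).ncard with hn
  -- (1) total count
  have h1 : (∑ y : {y : V // T.Adj r y}, n y) ≤ S.ncard := by
    have heq : (⋃ y ∈ (Finset.univ : Finset {y : V // T.Adj r y}), S ∩ subSet T r y.1).ncard
        = ∑ y : {y : V // T.Adj r y}, (S ∩ subSet T r y.1).ncard :=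
      ncard_biUnion_eq Finset.univ _ (fun i _ => Set.toFinite _)
        (fun i _ j _ hij => Set.disjoint_of_subset Set.inter_subset_right
          Set.inter_subset_right
          (subSet_disjoint hT i.2 j.2 (fun h => hij (Subtype.ext h))))
    calc (∑ y : {y : V // T.Adj r y}, n y)
        = (⋃ y ∈ (Finset.univ : Finset {y : V // T.Adj r y}), S ∩ subSet T r y.1).ncard :=
          heq.symm
      _ ≤ S.ncard := Set.ncard_le_ncard
          (Set.iUnion₂_subset fun i _ => Set.inter_subset_left) S.toFinite
  -- (2) non-rigid classes
  have h2 : ∀ y : {y : V // T.Adj r y},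
      rfixNum (subTree T r (reps (cls y.1)))
        (subRoot T r (reps (cls y.1)) (hreps (cls y.1)).ne') ≤ n y := by
    intro y
    by_contra hlt
    push_neg at hlt
    set A : Set (subSet T r y.1) := Subtype.val ⁻¹' S with hA
    have hAcard : A.ncard = n y := by
      rw [hn]
      rw [← Set.ncard_image_of_injective A Subtype.val_injective]
      congr 1
      rw [hA, Subtype.image_preimage_coe]
      exact Set.inter_comm _ _
    have hAnotfix : ¬ IsRFix (subTree T r y.1) (subRoot T r y.1 y.2.ne') A := by
      intro hfixA
      have hle : rfixNum (subTree T r y.1) (subRoot T r y.1 y.2.ne') ≤ n y :=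
        hAcard ▸ Nat.sInf_le ⟨A, rfl, hfixA⟩
      rw [hrfx y.1 y.2] at hle
      omega
    rw [IsRFix] at hAnotfix
    push_neg at hAnotfix
    obtain ⟨α, hαroot, hαfix, w, hw⟩ := hAnotfix
    have hroot : glueOne hT y.2 α hαroot r = r := by
      rw [glueOne_apply, glueFun_not_mem α root_not_mem_subSet]
    have hfixS : ∀ s ∈ S, glueOne hT y.2 α hαroot s = s := by
      intro s hs
      rw [glueOne_apply]
      by_cases hmem : s ∈ subSet T r y.1
      · rw [glueFun_mem α hmem]
        have hfs : α ⟨s, hmem⟩ = ⟨s, hmem⟩ := hαfix ⟨s, hmem⟩ hs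
        rw [hfs]
      · rw [glueFun_not_mem α hmem]
    have hcontra := hSfix _ hroot hfixS w.1
    rw [glueOne_apply, glueFun_mem α w.2] at hcontra
    exact hw (Subtype.ext hcontra)
  -- (3) rigid classes: at most one empty child per class
  have h3 : ∀ j : Fin g,
      rfixNum (subTree T r (reps j)) (subRoot T r (reps j) (hreps j).ne') = 0 →
      ∀ y z : {y : V // T.Adj r y}, cls y.1 = j → cls z.1 = j → y ≠ z →
      n y = 0 → n z = 0 → False := by
    intro j h0 y z hyj hzj hyz hny hnz
    have a1 : RootedIso (subTree T r y.1) (subRoot T r y.1 y.2.ne')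
        (subTree T r (reps j)) (subRoot T r (reps j) (hreps j).ne') := by
      have := hiso y.1 y.2
      rw [hyj] at this
      exact this
    have a2 : RootedIso (subTree T r z.1) (subRoot T r z.1 z.2.ne')
        (subTree T r (reps j)) (subRoot T r (reps j) (hreps j).ne') := by
      have := hiso z.1 z.2
      rw [hzj] at this
      exact this
    obtain ⟨e, he⟩ := a1.trans a2.symm
    have hdisj : Disjoint (subSet T r y.1) (subSet T r z.1) :=
      subSet_disjoint hT y.2 z.2 (fun h => hyz (Subtype.ext h))
    have hSempty : ∀ (w : {y : V // T.Adj r y}), n w = 0 → S ∩ subSet T r w.1 = ∅ := by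
      intro w hw
      have : (S ∩ subSet T r w.1).ncard = 0 := hw
      rwa [Set.ncard_eq_zero (Set.toFinite _)] at this
    have hroot : glueSwap hT y.2 z.2 hdisj he r = r := by
      rw [glueSwap_apply, swapFun_not_mem root_not_mem_subSet root_not_mem_subSet]
    have hfixS : ∀ s ∈ S, glueSwap hT y.2 z.2 hdisj he s = s := by
      intro s hs
      rw [glueSwap_apply]
      have hs1 : s ∉ subSet T r y.1 := fun h =>
        Set.eq_empty_iff_forall_notMem.1 (hSempty y hny) s ⟨hs, h⟩
      have hs2 : s ∉ subSet T r z.1 := fun h =>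
        Set.eq_empty_iff_forall_notMem.1 (hSempty z hnz) s ⟨hs, h⟩
      rw [swapFun_not_mem hs1 hs2]
    have hcontra := hSfix _ hroot hfixS y.1
    rw [glueSwap_apply, swapFun_mem₁ (mem_subSet_self y.2.ne')] at hcontra
    have h5 : (⟨y.1, mem_subSet_self y.2.ne'⟩ : subSet T r y.1)
        = subRoot T r y.1 y.2.ne' := Subtype.ext rfl
    rw [h5, he] at hcontra
    exact hyz (Subtype.ext hcontra.symm)
  -- per-class bound
  have h4 : ∀ j : Fin g,
      (if rfixNum (subTree T r (reps j)) (subRoot T r (reps j) (hreps j).ne') = 0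
        then m j - 1
        else m j * rfixNum (subTree T r (reps j)) (subRoot T r (reps j) (hreps j).ne'))
      ≤ ∑ y ∈ Finset.univ.filter (fun y : {y : V // T.Adj r y} => cls y.1 = j), n y := by
    intro j
    have hfcard : (Finset.univ.filter (fun y : {y : V // T.Adj r y} => cls y.1 = j)).card
        = m j := by
      rw [fiber_card (T.Adj r) cls j, ← hm j]
    by_cases h0 : rfixNum (subTree T r (reps j)) (subRoot T r (reps j) (hreps j).ne') = 0
    · rw [if_pos h0]
      set fib := Finset.univ.filter (fun y : {y : V // T.Adj r y} => cls y.1 = j) with hfib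
      have hcard1 : (fib.filter (fun y => n y = 0)).card ≤ 1 := by
        rw [Finset.card_le_one]
        intro a ha b hb
        by_contra hab
        have ha' := Finset.mem_filter.1 ha
        have hb' := Finset.mem_filter.1 hb
        exact h3 j h0 a b (Finset.mem_filter.1 ha'.1).2 (Finset.mem_filter.1 hb'.1).2
          hab ha'.2 hb'.2
      have hsplit := Finset.card_filter_add_card_filter_not
        (s := fib) (p := fun y => n y = 0)
      have hstep : fib.card - 1 ≤ (fib.filter (fun y => ¬ n y = 0)).card := by omega
      calc m j - 1 = fib.card - 1 := by rw [hfcard]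
        _ ≤ (fib.filter (fun y => ¬ n y = 0)).card := hstep
        _ = ∑ y ∈ fib.filter (fun y => ¬ n y = 0), 1 := by
            rw [Finset.card_eq_sum_ones]
        _ ≤ ∑ y ∈ fib.filter (fun y => ¬ n y = 0), n y :=
            Finset.sum_le_sum (fun y hy =>
              Nat.one_le_iff_ne_zero.2 (Finset.mem_filter.1 hy).2)
        _ ≤ ∑ y ∈ fib, n y :=
            Finset.sum_le_sum_of_subset (Finset.filter_subset _ _)
    · rw [if_neg h0]
      calc m j * rfixNum (subTree T r (reps j)) (subRoot T r (reps j) (hreps j).ne')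
          = ∑ _y ∈ Finset.univ.filter (fun y : {y : V // T.Adj r y} => cls y.1 = j),
              rfixNum (subTree T r (reps j)) (subRoot T r (reps j) (hreps j).ne') := by
            rw [Finset.sum_const, smul_eq_mul, hfcard]
        _ ≤ ∑ y ∈ Finset.univ.filter (fun y : {y : V // T.Adj r y} => cls y.1 = j), n y := by
            refine Finset.sum_le_sum (fun y hy => ?_)
            have hyj : cls y.1 = j := (Finset.mem_filter.1 hy).2
            have := h2 y
            rwa [hyj] at this
  calc (∑ j : Fin g,
        if rfixNum (subTree T r (reps j)) (subRoot T r (reps j) (hreps j).ne') = 0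
        then m j - 1
        else m j * rfixNum (subTree T r (reps j)) (subRoot T r (reps j) (hreps j).ne'))
      ≤ ∑ j : Fin g, ∑ y ∈ Finset.univ.filter
          (fun y : {y : V // T.Adj r y} => cls y.1 = j), n y :=
        Finset.sum_le_sum (fun j _ => h4 j)
    _ = ∑ y : {y : V // T.Adj r y}, n y :=
        Finset.sum_fiberwise Finset.univ (fun y : {y : V // T.Adj r y} => cls y.1) n
    _ ≤ S.ncard := h1
    _ = rfixNum T r := hScard

end Bounds

/-- Recursion for the fixing number of a rooted tree:
if the subtrees at the children of the root fall into `g` rooted-isomorphism classes,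
the `j`-th consisting of `m j` copies of `T_j`, then
`Fix(T) = Σ j, (m j - 1 if Fix(T_j) = 0, else m j * Fix(T_j))`. -/
theorem rfixNum_tree {V : Type*} [Fintype V] (T : SimpleGraph V) (r : V)
    (hT : T.IsTree)
    (g : ℕ) (reps : Fin g → V) (hreps : ∀ j, T.Adj r (reps j))
    (cls : V → Fin g)
    (hclsreps : ∀ j, cls (reps j) = j)
    (hiso : ∀ y, (h : T.Adj r y) →
      RootedIso (subTree T r y) (subRoot T r y h.ne')
        (subTree T r (reps (cls y))) (subRoot T r (reps (cls y)) (hreps (cls y)).ne'))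
    (hdistinct : ∀ j k : Fin g, j ≠ k →
      ¬ RootedIso (subTree T r (reps j)) (subRoot T r (reps j) (hreps j).ne')
        (subTree T r (reps k)) (subRoot T r (reps k) (hreps k).ne'))
    (m : Fin g → ℕ) (hm : ∀ j, m j = Nat.card {y : V // T.Adj r y ∧ cls y = j}) :
    rfixNum T r =
      ∑ j : Fin g,
        if rfixNum (subTree T r (reps j)) (subRoot T r (reps j) (hreps j).ne') = 0
        then m j - 1
        else m j * rfixNum (subTree T r (reps j)) (subRoot T r (reps j) (hreps j).ne') :=
  le_antisymm (upper_bound hT reps hreps cls hclsreps hiso hdistinct m hm)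
    (lower_bound hT reps hreps cls hclsreps hiso hdistinct m hm)
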